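/- Let n ≥ 2 and let μ be a probability measure on a compact set K ⊂ ℝⁿ ⊂ ℝ^{n+1} (embedded in the slice z = 0). For x = rζ with ζ ∈ 𝕊^{n-1}, define the potential u(rζ, z) = ∫_K (r² + z² + |y|² - 2r ζ·y)^{-(n-1)/2} dμ(y). Then there exist constants C, Z₀ > 0 such that for all z ≥ Z₀ and all r ≥ 0, | ∫_{𝕊^{n-1}} u(rζ, z) dζ - |𝕊^{n-1}| (r² + z²)^{-(n-1)/2} | ≤ C (r² + z²)^{-(n+1)/2}. -/

import Mathlib

set_option maxHeartbeats 1000000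

open MeasureTheory Set

lemma aux_taylor (p : ℝ) (hp : 0 < p) (t : ℝ) (ht : |t| ≤ 1/2) :
    |(1+t) ^ (-p) - 1 + p * t| ≤ p * ((p+1) * 2 ^ (p+2)) * t^2 := by
  have h2 : (0:ℝ) < 2 := by norm_num
  set L : ℝ := (p+1) * 2 ^ (p+2) with hL
  have hLpos : 0 < L := by positivity
  -- step 1 : on Icc (-1/2) (1/2), |(1+u)^(-(p+1)) - 1| ≤ L * |u|
  have step1 : ∀ u : ℝ, |u| ≤ 1/2 → |(1+u) ^ (-(p+1)) - 1| ≤ L * |u| := by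
    intro u hu
    have key := Convex.norm_image_sub_le_of_norm_hasDerivWithin_le
      (f := fun v : ℝ => (1+v) ^ (-(p+1)))
      (f' := fun v : ℝ => -(p+1) * (1+v) ^ (-(p+1)-1))
      (s := Icc (-(1:ℝ)/2) (1/2)) (C := L) ?_ ?_ (convex_Icc _ _) ?_ ?_
      (x := (0:ℝ)) (y := u)
    · simpa [Real.one_rpow, Real.rpow_natCast, abs_sub_comm] using key
    · intro v hv
      have hv1 : (1:ℝ)/2 ≤ 1 + v := by
        rcases hv with ⟨h1, h2⟩; linarith
      have hne : (1:ℝ) + v ≠ 0 := by linarith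
      have := ((hasDerivAt_id v).const_add (1:ℝ)).rpow_const (p := -(p+1)) (Or.inl hne)
      simpa using this.hasDerivWithinAt
    · intro v hv
      have hv1 : (1:ℝ)/2 ≤ 1 + v := by
        rcases hv with ⟨h1, h2⟩; linarith
      have hvpos : (0:ℝ) < 1 + v := by linarith
      have hb : (1+v) ^ (-(p+1)-1) ≤ ((1:ℝ)/2) ^ (-(p+1)-1) :=
        Real.rpow_le_rpow_of_nonpos (by norm_num) hv1 (by linarith)
      have heq : ((1:ℝ)/2) ^ (-(p+1)-1) = 2 ^ (p+2) := by
        have he : (-(p+1)-1 : ℝ) = -(p+2) := by ring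
        rw [he, one_div, Real.inv_rpow (by norm_num), Real.rpow_neg (by norm_num), inv_inv]
      have hnn : (0:ℝ) ≤ (1+v) ^ (-(p+1)-1) := Real.rpow_nonneg (by linarith) _
      rw [norm_mul, Real.norm_eq_abs, Real.norm_eq_abs, abs_of_nonneg hnn,
        abs_neg, abs_of_pos (by linarith : (0:ℝ) < p+1)]
      calc (p+1) * (1+v) ^ (-(p+1)-1) ≤ (p+1) * ((1:ℝ)/2) ^ (-(p+1)-1) := by
            exact mul_le_mul_of_nonneg_left hb (by linarith)
        _ = L := by rw [heq]
    · constructor <;> norm_num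
    · exact ⟨by cases abs_le.1 hu; linarith, by cases abs_le.1 hu; linarith⟩
  -- step 2
  have key2 := Convex.norm_image_sub_le_of_norm_hasDerivWithin_le
    (f := fun v : ℝ => (1+v) ^ (-p) + p * v)
    (f' := fun v : ℝ => -p * (1+v) ^ (-p-1) + p)
    (s := uIcc (0:ℝ) t) (C := p * (L * |t|)) ?_ ?_ (convex_uIcc _ _) ?_ ?_
    (x := (0:ℝ)) (y := t)
  · have : |(1+t) ^ (-p) + p * t - 1| ≤ p * (L * |t|) * |t| := by
      simpa [Real.one_rpow, abs_sub_comm, Real.norm_eq_abs] using key2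
    calc |(1+t) ^ (-p) - 1 + p * t| = |(1+t) ^ (-p) + p * t - 1| := by ring_nf
      _ ≤ p * (L * |t|) * |t| := this
      _ = p * ((p+1) * 2 ^ (p+2)) * t^2 := by
          rw [hL]; rw [show p * ((p+1) * 2 ^ (p+2) * |t|) * |t| = p * ((p+1) * 2 ^ (p+2)) * (|t| * |t|) by ring, abs_mul_abs_self, sq]
  · intro v hv
    have hvt : |v| ≤ |t| := by
      rcases Set.mem_uIcc.1 hv with ⟨h1, h2⟩ | ⟨h1, h2⟩
      · rw [abs_of_nonneg h1]; exact le_trans h2 (le_abs_self t)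
      · rw [abs_of_nonpos h2]; exact le_trans (neg_le_neg h1) (neg_le_abs t)
    have hv2 : |v| ≤ 1/2 := le_trans hvt ht
    have hne : (1:ℝ) + v ≠ 0 := by cases abs_le.1 hv2; intro h; linarith
    have hd := (((hasDerivAt_id v).const_add (1:ℝ)).rpow_const (p := -p) (Or.inl hne)).add_const 0
    have hd' : HasDerivAt (fun v : ℝ => (1+v) ^ (-p) + p * v) (-p * (1+v) ^ (-p-1) + p) v := by
      have h1 := ((hasDerivAt_id v).const_add (1:ℝ)).rpow_const (p := -p) (Or.inl hne)
      have h2 := (hasDerivAt_id v).const_mul p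
      exact (h1.add h2).congr_deriv (by simp only [id]; ring)
    exact hd'.hasDerivWithinAt
  · intro v hv
    have hvt : |v| ≤ |t| := by
      rcases Set.mem_uIcc.1 hv with ⟨h1, h2⟩ | ⟨h1, h2⟩
      · rw [abs_of_nonneg h1]; exact le_trans h2 (le_abs_self t)
      · rw [abs_of_nonpos h2]; exact le_trans (neg_le_neg h1) (neg_le_abs t)
    have hv2 : |v| ≤ 1/2 := le_trans hvt ht
    have hs1 := step1 v hv2
    have : -p * (1+v) ^ (-p-1) + p = -p * ((1+v) ^ (-(p+1)) - 1) := by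
      ring_nf
    show ‖-p * (1+v) ^ (-p-1) + p‖ ≤ p * (L * |t|)
    rw [Real.norm_eq_abs, this, abs_mul, abs_neg, abs_of_pos hp]
    calc p * |(1+v) ^ (-(p+1)) - 1| ≤ p * (L * |v|) := mul_le_mul_of_nonneg_left hs1 hp.le
      _ ≤ p * (L * |t|) := by
          exact mul_le_mul_of_nonneg_left (mul_le_mul_of_nonneg_left hvt hLpos.le) hp.le
  · exact Set.left_mem_uIcc
  · exact Set.right_mem_uIcc

lemma aux_core (p R r z s q w i : ℝ) (hp : 0 < p) (hR : 1 ≤ R) (hr : 0 ≤ r) (hz : 4*R ≤ z)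
    (hs : s = r^2 + z^2) (hq : q = s + w^2 - 2*r*i) (hw : 0 ≤ w) (hwR : w ≤ R) (hi : |i| ≤ w) :
    |q ^ (-p) - s ^ (-p) - 2*r*p*s^(-(p+1))*i| ≤ (9*R^2*(p*((p+1)*2^(p+2))) + p*R^2) * s^(-(p+1)) := by
  have hR0 : (0:ℝ) < R := lt_of_lt_of_le one_pos hR
  have hz0 : (0:ℝ) < z := lt_of_lt_of_le (by positivity) hz
  have hs0 : (0:ℝ) < s := by rw [hs]; positivity
  have hs16 : 16*R^2 ≤ s := by nlinarith
  have hiw : -w ≤ i ∧ i ≤ w := abs_le.1 hi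
  set d : ℝ := w^2 - 2*r*i with hd
  have hdabs : |d| ≤ R^2 + 2*r*R := by
    rw [abs_le]; constructor <;> nlinarith [hiw.1, hiw.2]
  have hds : 2*|d| ≤ s := by nlinarith [hdabs, sq_nonneg (r-2*R), mul_nonneg (sub_nonneg.2 hz) (by positivity : (0:ℝ) ≤ z + 4*R)]
  set t : ℝ := d/s with ht
  have habs_t : |t| ≤ 1/2 := by
    rw [ht, abs_div, abs_of_pos hs0, div_le_iff₀ hs0]
    nlinarith [hds]
  have h1t : (0:ℝ) ≤ 1 + t := by
    have := (abs_le.1 habs_t).1; linarith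
  have hq_eq : q = s*(1+t) := by
    rw [hq, ht, hd]; field_simp; ring
  have hqr : q ^ (-p) = s^(-p) * (1+t)^(-p) := by
    rw [hq_eq, Real.mul_rpow hs0.le h1t]
  have hv : s^(-(p+1)) = s^(-p) * s⁻¹ := by
    rw [← Real.rpow_neg_one s, ← Real.rpow_add hs0]; ring_nf
  have hu0 : (0:ℝ) < s^(-p) := Real.rpow_pos_of_pos hs0 _
  have hv0 : (0:ℝ) < s^(-(p+1)) := Real.rpow_pos_of_pos hs0 _
  have hE := aux_taylor p hp t habs_t
  have hid : q ^ (-p) - s ^ (-p) - 2*r*p*s^(-(p+1))*i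
      = s^(-p) * ((1+t)^(-p) - 1 + p*t) - p*s^(-(p+1))*w^2 := by
    rw [hqr, hv, ht, hd]; field_simp; ring
  have hd2 : d^2 ≤ 9*R^2*s := by
    have hA : d^2 ≤ (R^2+2*r*R)^2 := by
      have h2 := mul_self_le_mul_self (abs_nonneg d) hdabs
      rw [abs_mul_abs_self] at h2
      nlinarith [h2]
    have hz2 : 16*R^2 ≤ z^2 := by
      have h4 := mul_le_mul hz hz (by positivity : (0:ℝ) ≤ 4*R) hz0.le
      nlinarith [h4]
    have hB : (R^2+2*r*R)^2 ≤ 9*R^2*s := by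
      rw [hs]
      nlinarith [sq_nonneg (r-R), sq_nonneg r, hz2, hR0, mul_nonneg (mul_nonneg hR0.le hR0.le) (sq_nonneg r)]
    linarith
  have ht2 : s^(-p) * t^2 ≤ 9*R^2 * s^(-(p+1)) := by
    have h1 : t^2 ≤ 9*R^2/s := by
      rw [ht, div_pow, div_le_div_iff₀ (by positivity) hs0]
      calc d^2 * s ≤ (9*R^2*s)*s := mul_le_mul_of_nonneg_right hd2 hs0.le
        _ = 9*R^2*s^2 := by ring
    calc s^(-p)*t^2 ≤ s^(-p)*(9*R^2/s) := mul_le_mul_of_nonneg_left h1 hu0.le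
      _ = 9*R^2*s^(-(p+1)) := by rw [hv, div_eq_mul_inv]; ring

  rw [hid]
  have step : |s^(-p) * ((1+t)^(-p) - 1 + p*t) - p*s^(-(p+1))*w^2|
      ≤ s^(-p) * (p*((p+1)*2^(p+2)) * t^2) + p*s^(-(p+1))*w^2 := by
    refine (abs_sub _ _).trans ?_
    gcongr
    · rw [abs_mul, abs_of_pos hu0]
      exact mul_le_mul_of_nonneg_left hE hu0.le
    · rw [abs_of_nonneg (by positivity)]
  refine step.trans ?_
  have hM0 : (0:ℝ) < p*((p+1)*2^(p+2)) := by positivity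
  have h1 : s^(-p) * (p*((p+1)*2^(p+2)) * t^2) ≤ (p*((p+1)*2^(p+2))) * (9*R^2 * s^(-(p+1))) := by
    rw [show s^(-p) * (p*((p+1)*2^(p+2)) * t^2) = (p*((p+1)*2^(p+2))) * (s^(-p) * t^2) by ring]
    exact mul_le_mul_of_nonneg_left ht2 hM0.le
  have h2 : p*s^(-(p+1))*w^2 ≤ p*R^2*s^(-(p+1)) := by
    have hw2 : w^2 ≤ R^2 := by nlinarith
    have := mul_le_mul_of_nonneg_left hw2 (mul_nonneg hp.le hv0.le)
    nlinarith [this]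
  linarith [h1, h2]

/-- uniform asymptotic expansion of the spherical mean of the potential:
there are `C, Z₀ > 0` such that for all `z ≥ Z₀` and `r ≥ 0`,
`|∫_{𝕊^{n-1}} u(rζ,z) dζ - |𝕊^{n-1}|(r²+z²)^{-(n-1)/2}| ≤ C (r²+z²)^{-(n+1)/2}`,
where `u(rζ,z) = ∫_K (r²+z²+|y|²-2rζ·y)^{-(n-1)/2} dμ(y)`. -/
theorem stmt10 (n : ℕ) (hn : 2 ≤ n)
    (K : Set (EuclideanSpace ℝ (Fin n))) (hK : IsCompact K)
    (μ : Measure (EuclideanSpace ℝ (Fin n))) [IsProbabilityMeasure μ] (hμK : μ K = 1) :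
    ∃ C Z₀ : ℝ, 0 < C ∧ 0 < Z₀ ∧ ∀ z : ℝ, Z₀ ≤ z → ∀ r : ℝ, 0 ≤ r →
      |(∫ ζ in Metric.sphere (0 : EuclideanSpace ℝ (Fin n)) 1,
            (∫ y, (r ^ 2 + z ^ 2 + ‖y‖ ^ 2 - 2 * r * (inner ℝ ζ y : ℝ)) ^ (-((n : ℝ) - 1) / 2) ∂μ)
            ∂(μH[(n : ℝ) - 1]))
          - (μH[(n : ℝ) - 1] (Metric.sphere (0 : EuclideanSpace ℝ (Fin n)) 1)).toReal *
              (r ^ 2 + z ^ 2) ^ (-((n : ℝ) - 1) / 2)|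
        ≤ C * (r ^ 2 + z ^ 2) ^ (-((n : ℝ) + 1) / 2) := by
  obtain ⟨R₀, hR₀⟩ := hK.isBounded.subset_closedBall 0
  set R : ℝ := max R₀ 1 with hRdef
  have hR1 : (1:ℝ) ≤ R := le_max_right _ _
  have hR0 : (0:ℝ) < R := lt_of_lt_of_le one_pos hR1
  have hKR : ∀ y ∈ K, ‖y‖ ≤ R := fun y hy =>
    le_trans (mem_closedBall_zero_iff.1 (hR₀ hy)) (le_max_left _ _)
  have hn2 : (2:ℝ) ≤ (n:ℝ) := by exact_mod_cast hn
  have e1 : (-((n:ℝ)-1)/2) = -(((n:ℝ)-1)/2) := by ring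
  have e2 : (-((n:ℝ)+1)/2) = -((((n:ℝ)-1)/2)+1) := by ring
  simp only [e1, e2]
  set p : ℝ := ((n:ℝ)-1)/2 with hpdef
  have hp : 0 < p := by rw [hpdef]; linarith
  set M : ℝ := p*((p+1)*2^(p+2)) with hMdef
  have hM0 : 0 < M := by
    have : (0:ℝ) < (2:ℝ)^(p+2) := Real.rpow_pos_of_pos two_pos _
    positivity
  set C₂ : ℝ := 9*R^2*M + p*R^2 with hC2def
  have hC₂0 : 0 < C₂ := by positivity
  set S := Metric.sphere (0 : EuclideanSpace ℝ (Fin n)) 1 with hSdef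
  have hSm : MeasurableSet S := Metric.isClosed_sphere.measurableSet
  have hzn : ∀ ζ, ζ ∈ S → ‖ζ‖ = 1 := fun ζ hζ => mem_sphere_zero_iff_norm.1 hζ
  -- a.e. membership in K
  have hKc : μ Kᶜ = 0 := by
    have h := measure_compl hK.isClosed.measurableSet (measure_ne_top μ K)
    rw [hμK, measure_univ] at h
    simpa using h
  have hae : ∀ᵐ y ∂μ, y ∈ K := by
    rw [Filter.eventually_iff, mem_ae_iff]
    simpa using hKc
  have hyint : Integrable (fun y => y) μ := by
    refine Integrable.mono' (integrable_const R) measurable_id.aestronglyMeasurable ?_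
    filter_upwards [hae] with y hy using hKR y hy
  set ybar := ∫ y, y ∂μ with hybar
  -- abbreviations
  by_cases htop : μH[(n:ℝ)-1] S = ⊤
  · -- infinite sphere measure: everything degenerates to 0
    refine ⟨1, 4*R, one_pos, by positivity, ?_⟩
    intro z hz r hr
    have hz0 : (0:ℝ) < z := lt_of_lt_of_le (by positivity) hz
    have hql : ∀ ζ ∈ S, ∀ y ∈ K,
        (r^2+z^2+R^2+2*r*R) ^ (-p) ≤ (r^2+z^2+‖y‖^2-2*r*(inner ℝ ζ y:ℝ)) ^ (-p) := by
      intro ζ hζ y hy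
      have h1 : |(inner ℝ ζ y : ℝ)| ≤ ‖y‖ := by
        have h2 := abs_real_inner_le_norm ζ y
        rw [hzn ζ hζ] at h2
        simpa using h2
      have h1' := abs_le.1 h1
      have h3 := hKR y hy
      have hbase_pos : (0:ℝ) < r^2+z^2+‖y‖^2-2*r*(inner ℝ ζ y:ℝ) := by
        nlinarith [sq_nonneg (r - ‖y‖), sq_nonneg z]
      have hbase_le : r^2+z^2+‖y‖^2-2*r*(inner ℝ ζ y:ℝ) ≤ r^2+z^2+R^2+2*r*R := by
        nlinarith [norm_nonneg y]
      exact Real.rpow_le_rpow_of_nonpos hbase_pos hbase_le (by linarith)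
    have hint : ∀ ζ, ‖ζ‖ = 1 →
        Integrable (fun y => (r^2+z^2+‖y‖^2-2*r*(inner ℝ ζ y:ℝ)) ^ (-p)) μ := by
      intro ζ hζ
      refine Integrable.mono' (integrable_const ((z^2) ^ (-p))) ?_ ?_
      · apply Measurable.aestronglyMeasurable
        apply Measurable.pow _ measurable_const
        have hcont : Continuous fun y : EuclideanSpace ℝ (Fin n) =>
            r^2+z^2+‖y‖^2-2*r*(inner ℝ ζ y:ℝ) := by
          have hi : Continuous fun y : EuclideanSpace ℝ (Fin n) => (inner ℝ ζ y : ℝ) :=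
            continuous_const.inner continuous_id
          continuity
        exact hcont.measurable
      · refine Filter.Eventually.of_forall (fun y => ?_)
        have h1 : |(inner ℝ ζ y : ℝ)| ≤ ‖y‖ := by
          have h2 := abs_real_inner_le_norm ζ y
          rw [hζ] at h2
          simpa using h2
        have h1' := abs_le.1 h1
        have hbase_pos : (0:ℝ) < r^2+z^2+‖y‖^2-2*r*(inner ℝ ζ y:ℝ) := by
          nlinarith [sq_nonneg (r - ‖y‖)]
        have hb : z^2 ≤ r^2+z^2+‖y‖^2-2*r*(inner ℝ ζ y:ℝ) := by
          nlinarith [sq_nonneg (r - ‖y‖)]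
        rw [Real.norm_eq_abs, abs_of_nonneg (Real.rpow_nonneg hbase_pos.le _)]
        exact Real.rpow_le_rpow_of_nonpos (by positivity) hb (by linarith)
    have hglb : ∀ ζ ∈ S, (r^2+z^2+R^2+2*r*R) ^ (-p)
        ≤ ∫ y, (r^2+z^2+‖y‖^2-2*r*(inner ℝ ζ y:ℝ)) ^ (-p) ∂μ := by
      intro ζ hζ
      have hc : (r^2+z^2+R^2+2*r*R) ^ (-p)
          = ∫ _y, (r^2+z^2+R^2+2*r*R) ^ (-p) ∂μ := by
        simp [integral_const, measure_univ]
      rw [hc]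
      refine integral_mono_ae (integrable_const _) (hint ζ (hzn ζ hζ)) ?_
      filter_upwards [hae] with y hy using hql ζ hζ y hy
    have hnint : ¬ Integrable
        (fun ζ => ∫ y, (r^2+z^2+‖y‖^2-2*r*(inner ℝ ζ y:ℝ)) ^ (-p) ∂μ)
        (μH[(n:ℝ)-1].restrict S) := by
      intro hI
      have hc0 : (0:ℝ) < (r^2+z^2+R^2+2*r*R) ^ (-p) :=
        Real.rpow_pos_of_pos (by positivity) _
      have h1 := hI.measure_ge_lt_top hc0
      have h2 : (μH[(n:ℝ)-1].restrict S) S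
          ≤ (μH[(n:ℝ)-1].restrict S)
            {ζ | (r^2+z^2+R^2+2*r*R) ^ (-p)
              ≤ ∫ y, (r^2+z^2+‖y‖^2-2*r*(inner ℝ ζ y:ℝ)) ^ (-p) ∂μ} :=
        measure_mono (fun ζ hζ => hglb ζ hζ)
      rw [Measure.restrict_apply_self] at h2
      rw [htop] at h2
      exact absurd (lt_of_le_of_lt h2 h1) (by simp)
    rw [integral_undef hnint, htop]
    simp only [ENNReal.toReal_top, zero_mul, sub_zero, abs_zero, one_mul]
    positivity
  · -- finite sphere measure
    haveI hfin : IsFiniteMeasure (μH[(n:ℝ)-1].restrict S) := by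
      constructor
      rw [Measure.restrict_apply_univ]
      exact lt_top_iff_ne_top.2 htop
    refine ⟨(μH[(n:ℝ)-1] S).toReal * C₂ + 1, 4*R,
      by positivity, by positivity, ?_⟩
    intro z hz r hr
    have hz0 : (0:ℝ) < z := lt_of_lt_of_le (by positivity) hz
    have hs0 : (0:ℝ) < r^2+z^2 := by positivity
    -- inner ℝ integrability for unit ζ
    have hint : ∀ ζ : EuclideanSpace ℝ (Fin n), ‖ζ‖ = 1 →
        Integrable (fun y => (r^2+z^2+‖y‖^2-2*r*(inner ℝ ζ y:ℝ)) ^ (-p)) μ := by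
      intro ζ hζ
      refine Integrable.mono' (integrable_const ((z^2) ^ (-p))) ?_ ?_
      · apply Measurable.aestronglyMeasurable
        apply Measurable.pow _ measurable_const
        have hi : Continuous fun y : EuclideanSpace ℝ (Fin n) => (inner ℝ ζ y : ℝ) :=
          continuous_const.inner continuous_id
        have hcont : Continuous fun y : EuclideanSpace ℝ (Fin n) =>
            r^2+z^2+‖y‖^2-2*r*(inner ℝ ζ y:ℝ) := by continuity
        exact hcont.measurable
      · refine Filter.Eventually.of_forall (fun y => ?_)
        have h1 : |(inner ℝ ζ y : ℝ)| ≤ ‖y‖ := by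
          have h2 := abs_real_inner_le_norm ζ y
          rw [hζ] at h2
          simpa using h2
        have h1' := abs_le.1 h1
        have hbase_pos : (0:ℝ) < r^2+z^2+‖y‖^2-2*r*(inner ℝ ζ y:ℝ) := by
          nlinarith [sq_nonneg (r - ‖y‖)]
        have hb : z^2 ≤ r^2+z^2+‖y‖^2-2*r*(inner ℝ ζ y:ℝ) := by
          nlinarith [sq_nonneg (r - ‖y‖)]
        rw [Real.norm_eq_abs, abs_of_nonneg (Real.rpow_nonneg hbase_pos.le _)]
        exact Real.rpow_le_rpow_of_nonpos (by positivity) hb (by linarith)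
    -- strong measurability of the inner ℝ integral
    have hg_sm : StronglyMeasurable
        (fun ζ : EuclideanSpace ℝ (Fin n) =>
          ∫ y, (r^2+z^2+‖y‖^2-2*r*(inner ℝ ζ y:ℝ)) ^ (-p) ∂μ) := by
      have hmp : Measurable (fun w : EuclideanSpace ℝ (Fin n) × EuclideanSpace ℝ (Fin n) =>
          (r^2+z^2+‖w.2‖^2-2*r*(inner ℝ w.1 w.2:ℝ))) := by
        have hi : Continuous fun w : EuclideanSpace ℝ (Fin n) × EuclideanSpace ℝ (Fin n) =>
            (inner ℝ w.1 w.2 : ℝ) := continuous_inner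
        have : Continuous fun w : EuclideanSpace ℝ (Fin n) × EuclideanSpace ℝ (Fin n) =>
            (r^2+z^2+‖w.2‖^2-2*r*(inner ℝ w.1 w.2:ℝ)) := by continuity
        exact this.measurable
      exact ((hmp.pow measurable_const).stronglyMeasurable).integral_prod_right'
    -- the pointwise estimate on the sphere
    have hinner : ∀ ζ ∈ S,
        |(∫ y, (r^2+z^2+‖y‖^2-2*r*(inner ℝ ζ y:ℝ)) ^ (-p) ∂μ)
          - (r^2+z^2) ^ (-p) - 2*r*p*(r^2+z^2)^(-(p+1))*(inner ℝ ζ ybar : ℝ)|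
        ≤ C₂ * (r^2+z^2)^(-(p+1)) := by
      intro ζ hζ
      have hζ1 := hzn ζ hζ
      have hIi : Integrable (fun y => (inner ℝ ζ y : ℝ)) μ := by
        refine Integrable.mono' (integrable_const R) ?_ ?_
        · exact (continuous_const.inner continuous_id).aestronglyMeasurable
        · filter_upwards [hae] with y hy
          have h2 := abs_real_inner_le_norm ζ y
          rw [hζ1, one_mul] at h2
          exact h2.trans (hKR y hy)
      have hIq := hint ζ hζ1
      have key : (∫ y, (r^2+z^2+‖y‖^2-2*r*(inner ℝ ζ y:ℝ)) ^ (-p) ∂μ)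
            - (r^2+z^2) ^ (-p) - 2*r*p*(r^2+z^2)^(-(p+1))*(inner ℝ ζ ybar : ℝ)
          = ∫ y, ((r^2+z^2+‖y‖^2-2*r*(inner ℝ ζ y:ℝ)) ^ (-p)
              - (r^2+z^2) ^ (-p) - 2*r*p*(r^2+z^2)^(-(p+1))*(inner ℝ ζ y : ℝ)) ∂μ := by
        have e4 : (∫ y, (inner ℝ ζ y : ℝ) ∂μ) = (inner ℝ ζ ybar : ℝ) := integral_inner hyint ζ
        have i1 : Integrable (fun y => (r^2+z^2+‖y‖^2-2*r*(inner ℝ ζ y:ℝ)) ^ (-p)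
            - (r^2+z^2) ^ (-p)) μ := hIq.sub (integrable_const _)
        have i2 : Integrable (fun y => 2*r*p*(r^2+z^2)^(-(p+1)) * (inner ℝ ζ y : ℝ)) μ :=
          hIi.const_mul _
        simp only [integral_sub i1 i2,
          integral_sub hIq (integrable_const ((r^2+z^2) ^ (-p))),
          integral_const_mul, integral_const, measureReal_def, measure_univ, ENNReal.toReal_one, one_smul, e4]
      rw [key]
      have hbd : ∀ᵐ y ∂μ,
          ‖(r^2+z^2+‖y‖^2-2*r*(inner ℝ ζ y:ℝ)) ^ (-p)
            - (r^2+z^2) ^ (-p) - 2*r*p*(r^2+z^2)^(-(p+1))*(inner ℝ ζ y : ℝ)‖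
          ≤ C₂ * (r^2+z^2)^(-(p+1)) := by
        filter_upwards [hae] with y hy
        rw [Real.norm_eq_abs]
        have h1 : |(inner ℝ ζ y : ℝ)| ≤ ‖y‖ := by
          have h2 := abs_real_inner_le_norm ζ y
          rw [hζ1] at h2
          simpa using h2
        have := aux_core p R r z (r^2+z^2) (r^2+z^2+‖y‖^2-2*r*(inner ℝ ζ y:ℝ))
          (‖y‖) ((inner ℝ ζ y : ℝ)) hp hR1 hr hz rfl (by ring) (norm_nonneg y)
          (hKR y hy) h1
        calc |(r^2+z^2+‖y‖^2-2*r*(inner ℝ ζ y:ℝ)) ^ (-p)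
              - (r^2+z^2) ^ (-p) - 2*r*p*(r^2+z^2)^(-(p+1))*(inner ℝ ζ y : ℝ)|
            ≤ (9*R^2*(p*((p+1)*2^(p+2))) + p*R^2) * (r^2+z^2)^(-(p+1)) := this
          _ = C₂ * (r^2+z^2)^(-(p+1)) := by rw [hC2def, hMdef]
      calc ‖∫ y, ((r^2+z^2+‖y‖^2-2*r*(inner ℝ ζ y:ℝ)) ^ (-p)
              - (r^2+z^2) ^ (-p) - 2*r*p*(r^2+z^2)^(-(p+1))*(inner ℝ ζ y : ℝ)) ∂μ‖
          ≤ (C₂ * (r^2+z^2)^(-(p+1))) * (μ univ).toReal :=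
            norm_integral_le_of_norm_le_const hbd
        _ = C₂ * (r^2+z^2)^(-(p+1)) := by simp [measure_univ]
    -- integrability on the sphere
    have hg_int : Integrable
        (fun ζ : EuclideanSpace ℝ (Fin n) =>
          ∫ y, (r^2+z^2+‖y‖^2-2*r*(inner ℝ ζ y:ℝ)) ^ (-p) ∂μ)
        (μH[(n:ℝ)-1].restrict S) := by
      refine Integrable.mono' (integrable_const ((z^2) ^ (-p)))
        hg_sm.aestronglyMeasurable ?_
      rw [ae_restrict_iff' hSm]
      refine Filter.Eventually.of_forall (fun ζ hζ => ?_)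
      have hζ1 := hzn ζ hζ
      have hq_bd : ∀ᵐ y ∂μ, ‖(r^2+z^2+‖y‖^2-2*r*(inner ℝ ζ y:ℝ)) ^ (-p)‖ ≤ (z^2) ^ (-p) := by
        refine Filter.Eventually.of_forall (fun y => ?_)
        have h1 : |(inner ℝ ζ y : ℝ)| ≤ ‖y‖ := by
          have h2 := abs_real_inner_le_norm ζ y
          rw [hζ1] at h2
          simpa using h2
        have h1' := abs_le.1 h1
        have hbase_pos : (0:ℝ) < r^2+z^2+‖y‖^2-2*r*(inner ℝ ζ y:ℝ) := by
          nlinarith [sq_nonneg (r - ‖y‖)]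
        have hb : z^2 ≤ r^2+z^2+‖y‖^2-2*r*(inner ℝ ζ y:ℝ) := by
          nlinarith [sq_nonneg (r - ‖y‖)]
        rw [Real.norm_eq_abs, abs_of_nonneg (Real.rpow_nonneg hbase_pos.le _)]
        exact Real.rpow_le_rpow_of_nonpos (by positivity) hb (by linarith)
      calc ‖∫ y, (r^2+z^2+‖y‖^2-2*r*(inner ℝ ζ y:ℝ)) ^ (-p) ∂μ‖
          ≤ ((z^2) ^ (-p)) * (μ univ).toReal := norm_integral_le_of_norm_le_const hq_bd
        _ = (z^2) ^ (-p) := by simp [measure_univ]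
    have hlin_int : Integrable (fun ζ : EuclideanSpace ℝ (Fin n) => (inner ℝ ζ ybar : ℝ))
        (μH[(n:ℝ)-1].restrict S) := by
      refine Integrable.mono' (integrable_const ‖ybar‖)
        (continuous_id.inner continuous_const).aestronglyMeasurable ?_
      rw [ae_restrict_iff' hSm]
      refine Filter.Eventually.of_forall (fun ζ hζ => ?_)
      have h2 := abs_real_inner_le_norm ζ ybar
      rw [hzn ζ hζ, one_mul] at h2
      simpa using h2
    have hGint : Integrable (fun ζ : EuclideanSpace ℝ (Fin n) =>
        (r^2+z^2) ^ (-p) + 2*r*p*(r^2+z^2)^(-(p+1))*(inner ℝ ζ ybar : ℝ))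
        (μH[(n:ℝ)-1].restrict S) :=
      (integrable_const _).add (hlin_int.const_mul _)
    -- symmetry: the linear term integrates to zero
    have hmapν : Measure.map (fun ζ : EuclideanSpace ℝ (Fin n) => -ζ)
        (μH[(n:ℝ)-1].restrict S) = μH[(n:ℝ)-1].restrict S := by
      have hiso : Isometry (fun ζ : EuclideanSpace ℝ (Fin n) => -ζ) := isometry_neg
      have h1 : Measure.map (fun ζ : EuclideanSpace ℝ (Fin n) => -ζ)
          (μH[(n:ℝ)-1] : Measure (EuclideanSpace ℝ (Fin n))) = μH[(n:ℝ)-1] := by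
        rw [hiso.map_hausdorffMeasure (Or.inl (by linarith : (0:ℝ) ≤ (n:ℝ)-1))]
        have : range (fun ζ : EuclideanSpace ℝ (Fin n) => -ζ) = univ :=
          neg_surjective.range_eq
        rw [this, Measure.restrict_univ]
      have h2 : (fun ζ : EuclideanSpace ℝ (Fin n) => -ζ) ⁻¹' S = S := by
        ext ζ
        simp [hSdef, mem_sphere_zero_iff_norm]
      conv_rhs => rw [← h1]
      rw [Measure.restrict_map measurable_neg hSm, h2]
    have hJ : ∫ ζ in S, (inner ℝ ζ ybar : ℝ) ∂(μH[(n:ℝ)-1]) = 0 := by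
      have hemb : MeasurableEmbedding (fun ζ : EuclideanSpace ℝ (Fin n) => -ζ) :=
        (Homeomorph.neg (EuclideanSpace ℝ (Fin n))).measurableEmbedding
      have h3 : ∫ ζ in S, (inner ℝ ζ ybar : ℝ) ∂(μH[(n:ℝ)-1])
          = ∫ ζ in S, (inner ℝ (-ζ) ybar : ℝ) ∂(μH[(n:ℝ)-1]) := by
        conv_lhs => rw [← hmapν]
        exact hemb.integral_map _
      have h4 : ∫ ζ in S, (inner ℝ (-ζ) ybar : ℝ) ∂(μH[(n:ℝ)-1])
          = - ∫ ζ in S, (inner ℝ ζ ybar : ℝ) ∂(μH[(n:ℝ)-1]) := by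
        rw [← integral_neg]
        congr 1
        ext ζ
        rw [inner_neg_left]
      rw [h4] at h3
      linarith
    -- split the integral
    have h5 : ∫ ζ in S, ((r^2+z^2) ^ (-p)
          + 2*r*p*(r^2+z^2)^(-(p+1))*(inner ℝ ζ ybar : ℝ)) ∂(μH[(n:ℝ)-1])
        = (μH[(n:ℝ)-1] S).toReal * (r^2+z^2) ^ (-p) := by
      have i3 : Integrable (fun ζ : EuclideanSpace ℝ (Fin n) =>
          2*r*p*(r^2+z^2)^(-(p+1)) * (inner ℝ ζ ybar : ℝ)) (μH[(n:ℝ)-1].restrict S) :=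
        hlin_int.const_mul _
      simp only [integral_add (integrable_const ((r^2+z^2) ^ (-p))) i3,
        integral_const_mul, hJ, integral_const, measureReal_def, Measure.restrict_apply_univ,
        smul_eq_mul, mul_zero, add_zero]
    have h8 : (fun ζ : EuclideanSpace ℝ (Fin n) =>
        (∫ y, (r^2+z^2+‖y‖^2-2*r*(inner ℝ ζ y:ℝ)) ^ (-p) ∂μ)
          - (r^2+z^2) ^ (-p) - 2*r*p*(r^2+z^2)^(-(p+1))*(inner ℝ ζ ybar : ℝ))
        = (fun ζ : EuclideanSpace ℝ (Fin n) =>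
        (∫ y, (r^2+z^2+‖y‖^2-2*r*(inner ℝ ζ y:ℝ)) ^ (-p) ∂μ)
          - ((r^2+z^2) ^ (-p) + 2*r*p*(r^2+z^2)^(-(p+1))*(inner ℝ ζ ybar : ℝ))) := by
      funext ζ; ring
    have hFeq : ∫ ζ in S, ((∫ y, (r^2+z^2+‖y‖^2-2*r*(inner ℝ ζ y:ℝ)) ^ (-p) ∂μ)
          - (r^2+z^2) ^ (-p) - 2*r*p*(r^2+z^2)^(-(p+1))*(inner ℝ ζ ybar : ℝ)) ∂(μH[(n:ℝ)-1])
        = (∫ ζ in S, (∫ y, (r^2+z^2+‖y‖^2-2*r*(inner ℝ ζ y:ℝ)) ^ (-p) ∂μ) ∂(μH[(n:ℝ)-1]))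
          - (μH[(n:ℝ)-1] S).toReal * (r^2+z^2) ^ (-p) := by
      rw [h8]
      simp only [integral_sub hg_int hGint]
      rw [h5]
    have hF : ‖∫ ζ in S, ((∫ y, (r^2+z^2+‖y‖^2-2*r*(inner ℝ ζ y:ℝ)) ^ (-p) ∂μ)
          - (r^2+z^2) ^ (-p) - 2*r*p*(r^2+z^2)^(-(p+1))*(inner ℝ ζ ybar : ℝ)) ∂(μH[(n:ℝ)-1])‖
        ≤ (C₂ * (r^2+z^2)^(-(p+1))) * (μH[(n:ℝ)-1] S).toReal := by
      have hbd : ∀ᵐ ζ ∂(μH[(n:ℝ)-1].restrict S),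
          ‖(∫ y, (r^2+z^2+‖y‖^2-2*r*(inner ℝ ζ y:ℝ)) ^ (-p) ∂μ)
            - (r^2+z^2) ^ (-p) - 2*r*p*(r^2+z^2)^(-(p+1))*(inner ℝ ζ ybar : ℝ)‖
          ≤ C₂ * (r^2+z^2)^(-(p+1)) := by
        rw [ae_restrict_iff' hSm]
        exact Filter.Eventually.of_forall (fun ζ hζ => by
          rw [Real.norm_eq_abs]; exact hinner ζ hζ)
      calc ‖∫ ζ in S, ((∫ y, (r^2+z^2+‖y‖^2-2*r*(inner ℝ ζ y:ℝ)) ^ (-p) ∂μ)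
            - (r^2+z^2) ^ (-p) - 2*r*p*(r^2+z^2)^(-(p+1))*(inner ℝ ζ ybar : ℝ)) ∂(μH[(n:ℝ)-1])‖
          ≤ (C₂ * (r^2+z^2)^(-(p+1))) * ((μH[(n:ℝ)-1].restrict S) univ).toReal :=
            norm_integral_le_of_norm_le_const hbd
        _ = (C₂ * (r^2+z^2)^(-(p+1))) * (μH[(n:ℝ)-1] S).toReal := by
            rw [Measure.restrict_apply_univ]
    have hX0 : (0:ℝ) < (r^2+z^2)^(-(p+1)) := Real.rpow_pos_of_pos hs0 _
    have hσ0 : (0:ℝ) ≤ (μH[(n:ℝ)-1] S).toReal := ENNReal.toReal_nonneg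
    have habs : |(∫ ζ in S, (∫ y, (r^2+z^2+‖y‖^2-2*r*(inner ℝ ζ y:ℝ)) ^ (-p) ∂μ) ∂(μH[(n:ℝ)-1]))
          - (μH[(n:ℝ)-1] S).toReal * (r^2+z^2) ^ (-p)|
        ≤ (C₂ * (r^2+z^2)^(-(p+1))) * (μH[(n:ℝ)-1] S).toReal := by
      rw [← Real.norm_eq_abs, ← hFeq]
      exact hF
    refine habs.trans ?_
    have hfin2 : (C₂ * (r^2+z^2)^(-(p+1))) * (μH[(n:ℝ)-1] S).toReal
        = ((μH[(n:ℝ)-1] S).toReal * C₂) * (r^2+z^2)^(-(p+1)) := by ring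
    rw [hfin2]
    have h9 : ((μH[(n:ℝ)-1] S).toReal * C₂) ≤ ((μH[(n:ℝ)-1] S).toReal * C₂ + 1) :=
      le_add_of_nonneg_right zero_le_one
    exact mul_le_mul_of_nonneg_right h9 hX0.le
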